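/- Optimality relation between TV primal and its flow dual: if ξ* = (ξ^{ij,*}) minimizes ‖z − Σ_{(i,j)∈E} ξ^{ij}‖² over the feasible set {ξ^{ij}_k = 0 for k∉{i,j}, ξ^{ij}_i + ξ^{ij}_j = 0, |ξ^{ij}_i| ≤ θ_{ij}}, then β* := z − Σ_{(i,j)∈E} ξ^{ij,*} minimizes β ↦ (1/2)‖β − z‖² + Σ_{(i,j)∈E} θ_{ij}|β_i − β_j|. -/

import Mathlib

open Finset

private lemma sum_two_aux {d : ℕ} (F : Fin d → ℝ) (a b : Fin d) (hab : a ≠ b)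
    (h : ∀ k, k ≠ a → k ≠ b → F k = 0) : ∑ k, F k = F a + F b := by
  have hsub : ({a, b} : Finset (Fin d)) ⊆ Finset.univ := Finset.subset_univ _
  have := Finset.sum_subset hsub (fun k _ hk => by
    simp only [Finset.mem_insert, Finset.mem_singleton, not_or] at hk
    exact h k hk.1 hk.2)
  rw [← this, Finset.sum_pair hab]

private lemma flow_sum_aux {d : ℕ} (f : Fin d → ℝ) (a b : Fin d)
    (h0 : ∀ k, k ≠ a → k ≠ b → f k = 0) (hab : f a + f b = 0) (β : Fin d → ℝ) :
    ∑ k, f k * β k = f a * (β a - β b) := by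
  by_cases h : a = b
  · subst h
    have hfa : f a = 0 := by linarith
    have hz : ∀ k, f k = 0 := by
      intro k
      by_cases hk : k = a
      · subst hk; exact hfa
      · exact h0 k hk hk
    simp [hz]
  · rw [sum_two_aux (fun k => f k * β k) a b h
      (fun k hk1 hk2 => by show f k * β k = 0; rw [h0 k hk1 hk2]; ring)]
    have hfb : f b = -f a := by linarith
    rw [hfb]; ring

open Finset in
/-- Recovering the TV primal solution from a dual optimal flow: if `ξ*` minimizes
`‖z − Σ_{(i,j)∈E} ξ^{ij}‖²` over feasible edge flows (supported on `{i,j}`,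
antisymmetric, `|ξ^{ij}_i| ≤ θ_{ij}`), then `β* = z − Σ ξ^{ij,*}` minimizes
`β ↦ (1/2)‖β − z‖² + Σ_{(i,j)∈E} θ_{ij}|β_i − β_j|`. -/
theorem stmt_10 (d : ℕ) (hd : 1 ≤ d) (z : Fin d → ℝ) (E : Finset (Fin d × Fin d))
    (θ : Fin d × Fin d → ℝ) (hθ : ∀ e ∈ E, 0 ≤ θ e)
    (ξs : (Fin d × Fin d) → Fin d → ℝ)
    (hfeas : ∀ e ∈ E, (∀ k, k ≠ e.1 → k ≠ e.2 → ξs e k = 0) ∧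
      ξs e e.1 + ξs e e.2 = 0 ∧ |ξs e e.1| ≤ θ e)
    (hmin : ∀ ξ : (Fin d × Fin d) → Fin d → ℝ,
      (∀ e ∈ E, (∀ k, k ≠ e.1 → k ≠ e.2 → ξ e k = 0) ∧
        ξ e e.1 + ξ e e.2 = 0 ∧ |ξ e e.1| ≤ θ e) →
      ∑ k, (z k - ∑ e ∈ E, ξs e k)^2 ≤ ∑ k, (z k - ∑ e ∈ E, ξ e k)^2) :
    ∀ β : Fin d → ℝ,
      (1/2) * ∑ k, ((z k - ∑ e ∈ E, ξs e k) - z k)^2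
          + ∑ e ∈ E, θ e * |(z e.1 - ∑ e' ∈ E, ξs e' e.1) - (z e.2 - ∑ e' ∈ E, ξs e' e.2)|
        ≤ (1/2) * ∑ k, (β k - z k)^2 + ∑ e ∈ E, θ e * |β e.1 - β e.2| := by
  intro β
  set w : Fin d → ℝ := fun k => z k - ∑ e ∈ E, ξs e k with hw
  -- Lemma A : pairing inequality for any vector
  have hA : ∀ e ∈ E, ∀ γ : Fin d → ℝ,
      ξs e e.1 * (γ e.1 - γ e.2) ≤ θ e * |γ e.1 - γ e.2| := by
    intro e he γ
    calc ξs e e.1 * (γ e.1 - γ e.2) ≤ |ξs e e.1 * (γ e.1 - γ e.2)| := le_abs_self _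
      _ = |ξs e e.1| * |γ e.1 - γ e.2| := abs_mul _ _
      _ ≤ θ e * |γ e.1 - γ e.2| :=
        mul_le_mul_of_nonneg_right (hfeas e he).2.2 (abs_nonneg _)
  -- Lemma B : complementary slackness at β* = w
  have hB : ∀ e ∈ E, θ e * |w e.1 - w e.2| ≤ ξs e e.1 * (w e.1 - w e.2) := by
    intro e he
    by_cases heq : e.1 = e.2
    · have hD0 : w e.1 - w e.2 = 0 := by rw [heq]; ring
      simp [hD0]
    · set s := ξs e e.1 with hsdef
      set D := w e.1 - w e.2 with hDdef
      have hs : |s| ≤ θ e := (hfeas e he).2.2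
      have hs2 : ξs e e.2 = -s := by
        have := (hfeas e he).2.1; linarith
      have key : ∀ t : ℝ, |t| ≤ θ e → (t - s) * D ≤ (t - s)^2 := by
        intro t ht
        set ξ' : (Fin d × Fin d) → Fin d → ℝ := fun e' k =>
          if e' = e then (if k = e.1 then t else if k = e.2 then -t else 0) else ξs e' k
          with hξ'
        have hfeas' : ∀ e' ∈ E, (∀ k, k ≠ e'.1 → k ≠ e'.2 → ξ' e' k = 0) ∧
            ξ' e' e'.1 + ξ' e' e'.2 = 0 ∧ |ξ' e' e'.1| ≤ θ e' := by
          intro e' he'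
          by_cases h : e' = e
          · subst h
            refine ⟨fun k hk1 hk2 => by simp [hξ', if_neg hk1, if_neg hk2], ?_, ?_⟩
            · simp [hξ', Ne.symm heq]
            · simpa [hξ'] using ht
          · simpa [hξ', h] using hfeas e' he'
        have hm := hmin ξ' hfeas'
        -- sum of perturbed flow
        have hsum : ∀ k, ∑ e' ∈ E, ξ' e' k = (∑ e' ∈ E, ξs e' k) + (ξ' e k - ξs e k) := by
          intro k
          have h1 : ∑ e' ∈ E, ξ' e' k
              = ∑ e' ∈ E, (ξs e' k + (if e' = e then ξ' e k - ξs e k else 0)) := by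
            apply Finset.sum_congr rfl
            intro e' _
            by_cases h : e' = e
            · subst h; simp
            · simp [hξ', h]
          rw [h1, Finset.sum_add_distrib, Finset.sum_ite_eq' E e
            (fun _ => ξ' e k - ξs e k), if_pos he]
        -- the perturbation δ
        set δ : Fin d → ℝ := fun k => ξ' e k - ξs e k with hδ
        have hδ1 : δ e.1 = t - s := by simp [hδ, hξ', hsdef]
        have hδ2 : δ e.2 = -(t - s) := by
          simp [hδ, hξ', Ne.symm heq, hs2]; ring
        have hδ0 : ∀ k, k ≠ e.1 → k ≠ e.2 → δ k = 0 := by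
          intro k hk1 hk2
          simp [hδ, hξ', if_neg hk1, if_neg hk2, (hfeas e he).1 k hk1 hk2]
        have hrw : ∀ k, z k - ∑ e' ∈ E, ξ' e' k = w k - δ k := by
          intro k
          rw [hsum k]
          simp only [hw, hδ]
          ring
        rw [show (∑ k, (z k - ∑ e' ∈ E, ξ' e' k)^2) = ∑ k, (w k - δ k)^2 from
          Finset.sum_congr rfl (fun k _ => by rw [hrw k])] at hm
        have hm' : (0:ℝ) ≤ ∑ k, ((w k - δ k)^2 - (w k)^2) := by
          rw [Finset.sum_sub_distrib]
          have : ∑ k, (w k)^2 = ∑ k, (z k - ∑ e ∈ E, ξs e k)^2 := by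
            apply Finset.sum_congr rfl; intro k _; rw [hw]
          linarith [hm, this]
        rw [sum_two_aux (fun k => (w k - δ k)^2 - (w k)^2) e.1 e.2 heq
          (fun k hk1 hk2 => by show (w k - δ k)^2 - (w k)^2 = 0; rw [hδ0 k hk1 hk2]; ring)] at hm'
        rw [hδ1, hδ2] at hm'
        rw [hDdef]
        nlinarith [hm']
      -- Derive θ|D| ≤ s * D from key
      have hsle : s ≤ θ e := le_of_abs_le hs
      have hsge : -θ e ≤ s := neg_le_of_abs_le hs
      rcases lt_trichotomy D 0 with hD | hD | hD
      · have hsθ : s = -θ e := by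
          by_contra hne
          have hlt : -θ e < s := lt_of_le_of_ne hsge (Ne.symm hne)
          set m := min (-D) (s + θ e) with hmdef
          have hm0 : 0 < m := lt_min (by linarith) (by linarith)
          have hmD : m ≤ -D := min_le_left _ _
          have hmθ : m ≤ s + θ e := min_le_right _ _
          have ht : |s - m/2| ≤ θ e := by
            rw [abs_le]; constructor <;> nlinarith
          have hk := key (s - m/2) ht
          nlinarith [hk, mul_le_mul_of_nonneg_left hmD (by positivity : (0:ℝ) ≤ m/2)]
        rw [abs_of_neg hD, hsθ]; ring_nf; linarith
      · simp [hD]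
      · have hsθ : s = θ e := by
          by_contra hne
          have hlt : s < θ e := lt_of_le_of_ne hsle hne
          set m := min D (θ e - s) with hmdef
          have hm0 : 0 < m := lt_min hD (by linarith)
          have hmD : m ≤ D := min_le_left _ _
          have hmθ : m ≤ θ e - s := min_le_right _ _
          have ht : |s + m/2| ≤ θ e := by
            rw [abs_le]; constructor <;> nlinarith
          have hk := key (s + m/2) ht
          nlinarith [hk, mul_le_mul_of_nonneg_left hmD (by positivity : (0:ℝ) ≤ m/2)]
        rw [abs_of_pos hD, hsθ]
  -- Now the main chain.
  have hwk : ∀ k, z k - ∑ e ∈ E, ξs e k = w k := fun k => rfl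
  have hflow : ∀ e ∈ E, ∀ γ : Fin d → ℝ,
      ∑ k, ξs e k * γ k = ξs e e.1 * (γ e.1 - γ e.2) := by
    intro e he γ
    exact flow_sum_aux (ξs e) e.1 e.2 (hfeas e he).1 (hfeas e he).2.1 γ
  -- pairing sums
  have hpair : ∀ γ : Fin d → ℝ,
      ∑ e ∈ E, ξs e e.1 * (γ e.1 - γ e.2) = ∑ k, (z k - w k) * γ k := by
    intro γ
    have h1 : ∑ e ∈ E, ξs e e.1 * (γ e.1 - γ e.2) = ∑ e ∈ E, ∑ k, ξs e k * γ k :=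
      Finset.sum_congr rfl (fun e he => (hflow e he γ).symm)
    rw [h1, Finset.sum_comm]
    apply Finset.sum_congr rfl
    intro k _
    rw [← Finset.sum_mul]
    congr 1
    rw [hw]; ring
  -- rewrite LHS quadratic term
  have hlhs : ∀ k, ((z k - ∑ e ∈ E, ξs e k) - z k)^2 = (z k - w k)^2 := by
    intro k; rw [hwk k]; ring
  clear_value w
  calc (1/2) * ∑ k, ((z k - ∑ e ∈ E, ξs e k) - z k)^2
        + ∑ e ∈ E, θ e * |(z e.1 - ∑ e' ∈ E, ξs e' e.1) - (z e.2 - ∑ e' ∈ E, ξs e' e.2)|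
      = (1/2) * ∑ k, (z k - w k)^2 + ∑ e ∈ E, θ e * |w e.1 - w e.2| := by
        have h1 : ∑ k, ((z k - ∑ e ∈ E, ξs e k) - z k)^2 = ∑ k, (z k - w k)^2 :=
          Finset.sum_congr rfl (fun k _ => hlhs k)
        have h2 : (∑ e ∈ E, θ e * |(z e.1 - ∑ e' ∈ E, ξs e' e.1) - (z e.2 - ∑ e' ∈ E, ξs e' e.2)|)
            = ∑ e ∈ E, θ e * |w e.1 - w e.2| :=
          Finset.sum_congr rfl (fun e _ => by rw [hwk e.1, hwk e.2])
        rw [h1, h2]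
    _ ≤ (1/2) * ∑ k, (z k - w k)^2 + ∑ e ∈ E, ξs e e.1 * (w e.1 - w e.2) :=
        add_le_add_right (Finset.sum_le_sum (fun e he => hB e he)) _
    _ = (1/2) * ∑ k, (z k - w k)^2 + ∑ k, (z k - w k) * w k := by rw [hpair w]
    _ = ∑ k, ((1/2) * (z k - w k)^2 + (z k - w k) * w k) := by
        rw [Finset.sum_add_distrib, Finset.mul_sum]
    _ ≤ ∑ k, ((1/2) * (β k - z k)^2 + (z k - w k) * β k) := by
        apply Finset.sum_le_sum
        intro k _
        nlinarith [sq_nonneg (β k - w k)]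
    _ = (1/2) * ∑ k, (β k - z k)^2 + ∑ k, (z k - w k) * β k := by
        rw [Finset.sum_add_distrib, Finset.mul_sum]
    _ ≤ (1/2) * ∑ k, (β k - z k)^2 + ∑ e ∈ E, θ e * |β e.1 - β e.2| := by
        rw [← hpair β]
        exact add_le_add_right (Finset.sum_le_sum (fun e he => hA e he β)) _
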